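/- The quasi-standard geometric representation σ_M : W → GL(V) of the Coxeter group associated to an E-GCM is faithful. -/
import Mathlib


open Real

/-- The quasi-standard reflection `s_i` as a linear endomorphism of `V = ℝⁿ` with basis of
simple roots `α_j = Pi.single j 1`: `s_i(v) = v − 2B(α_i,v)α_i` where `B(α_i,α_j) = M_ij/2`. -/
noncomputable def reflLin {n : ℕ} (M : Matrix (Fin n) (Fin n) ℝ) (i : Fin n) :
    Module.End ℝ (Fin n → ℝ) where
  toFun v := v - (∑ j, M i j * v j) • (Pi.single i 1 : Fin n → ℝ)
  map_add' v w := by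
    ext t
    simp only [Pi.add_apply, Pi.sub_apply, Pi.smul_apply, smul_eq_mul, mul_add,
      Finset.sum_add_distrib]
    ring
  map_smul' c v := by
    ext t
    simp only [Pi.smul_apply, Pi.sub_apply, smul_eq_mul, RingHom.id_apply]
    rw [show (∑ j, M i j * (c * v j)) = c * ∑ j, M i j * v j from by
      rw [Finset.mul_sum]; exact Finset.sum_congr rfl fun j _ => by ring]
    ring

/-- `M` is an E-generalized Cartan matrix whose amplitude products correspond to the
Coxeter matrix `K` (where `K i j = 0` encodes `m_ij = ∞`). -/
def IsEGCM {n : ℕ} (M : Matrix (Fin n) (Fin n) ℝ) (K : CoxeterMatrix (Fin n)) : Prop :=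
  (∀ i, M i i = 2) ∧ (∀ i j, i ≠ j → M i j ≤ 0) ∧ (∀ i j, M i j = 0 ↔ M j i = 0) ∧
  (∀ i j, i ≠ j →
    (K i j = 0 ∧ 4 ≤ M i j * M j i) ∨
    (2 ≤ K i j ∧ M i j * M j i = 4 * Real.cos (π / (K i j : ℝ)) ^ 2))

namespace QSF

/-- The coefficient recursion for the action of alternating words in `s i, s j` on the simple
root `α i`, in coordinates `(c, d)` where the actual vector is `c • α i + (-M j i * d) • α j`,
and `p = M i j * M j i`. -/
noncomputable def altC (p : ℝ) : ℕ → ℝ × ℝ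
  | 0 => (1, 0)
  | t + 1 =>
      if Even t then ((altC p t).1, (altC p t).1 - (altC p t).2)
      else (p * (altC p t).2 - (altC p t).1, (altC p t).2)

lemma sin_rec (θ x : ℝ) : Real.sin (x + θ) = 2 * Real.cos θ * Real.sin x - Real.sin (x - θ) := by
  rw [Real.sin_add, Real.sin_sub]; ring

lemma altC_closed (m : ℕ) (hm : 3 ≤ m) (t : ℕ) :
    (altC (4 * Real.cos (π / m) ^ 2) t).1 * Real.sin (π / m)
      = Real.sin ((if Even t then (t + 1 : ℕ) else t) * (π / m))
    ∧ (altC (4 * Real.cos (π / m) ^ 2) t).2 * (2 * Real.sin (π / m) * Real.cos (π / m))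
      = Real.sin ((if Even t then t else (t + 1 : ℕ)) * (π / m)) := by
  set θ := π / m with hθ
  induction t with
  | zero => simp [altC]
  | succ t ih =>
    obtain ⟨ih1, ih2⟩ := ih
    have key : Real.sin (((t : ℝ) + 2) * θ)
        = 2 * Real.cos θ * Real.sin (((t : ℝ) + 1) * θ) - Real.sin ((t : ℝ) * θ) := by
      have h1 : ((t : ℝ) + 2) * θ = ((t : ℝ) + 1) * θ + θ := by ring
      have h2 : ((t : ℝ) + 1) * θ - θ = (t : ℝ) * θ := by ring
      rw [h1, sin_rec, h2]
    rcases Nat.even_or_odd t with he | ho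
    · have hne : ¬ Even (t + 1) := by simp [Nat.even_add_one, he]
      rw [if_pos he] at ih1 ih2
      constructor
      · rw [altC, if_pos he, if_neg hne]
        simpa using ih1
      · rw [altC, if_pos he, if_neg hne]
        push_cast
        rw [show ((t:ℝ) + 1 + 1) * θ = ((t:ℝ) + 2) * θ from by ring, key, sub_mul]
        push_cast at ih1 ih2
        rw [ih2, show ((altC (4 * Real.cos θ ^ 2) t).1 * (2 * Real.sin θ * Real.cos θ))
            = 2 * Real.cos θ * ((altC (4 * Real.cos θ ^ 2) t).1 * Real.sin θ) from by ring, ih1]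
    · have he' : ¬ Even t := Nat.not_even_iff_odd.mpr ho
      have hne : Even (t + 1) := Nat.even_add_one.mpr he'
      rw [if_neg he'] at ih1 ih2
      constructor
      · rw [altC, if_neg he', if_pos hne]
        push_cast
        rw [show ((t:ℝ) + 1 + 1) * θ = ((t:ℝ) + 2) * θ from by ring, key, sub_mul]
        push_cast at ih1 ih2
        rw [ih1, show (4 * Real.cos θ ^ 2 * (altC (4 * Real.cos θ ^ 2) t).2 * Real.sin θ)
            = 2 * Real.cos θ * ((altC (4 * Real.cos θ ^ 2) t).2 * (2 * Real.sin θ * Real.cos θ))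
            from by ring, ih2]
      · rw [altC, if_neg he', if_pos hne]
        simpa using ih2

lemma altC_nonneg_fin (m : ℕ) (hm : 2 ≤ m) (t : ℕ) (ht : t + 1 ≤ m) :
    0 ≤ (altC (4 * Real.cos (π / m) ^ 2) t).1 ∧ 0 ≤ (altC (4 * Real.cos (π / m) ^ 2) t).2 := by
  rcases eq_or_lt_of_le hm with hm2 | hm3
  · -- m = 2, t ≤ 1
    subst hm2
    have ht1 : t ≤ 1 := by omega
    interval_cases t
    · simp [altC]
    · simp [altC]
  · have hm3 : 3 ≤ m := hm3
    have hmpos : (0 : ℝ) < m := by positivity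
    have hθpos : 0 < π / m := by positivity
    have hθlt : π / m ≤ π / 3 := by
      apply div_le_div_of_nonneg_left pi_pos.le (by norm_num)
      exact_mod_cast hm3
    have hsin : 0 < Real.sin (π / m) := by
      apply Real.sin_pos_of_pos_of_lt_pi hθpos
      calc π / m ≤ π / 3 := hθlt
        _ < π := by linarith [pi_pos]
    have hcos : 0 < Real.cos (π / m) := by
      apply Real.cos_pos_of_mem_Ioo
      constructor
      · linarith [pi_pos]
      · calc π / m ≤ π / 3 := hθlt
          _ < π / 2 := by linarith [pi_pos]
    have hnn : ∀ k : ℕ, k ≤ m → 0 ≤ Real.sin ((k : ℝ) * (π / m)) := by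
      intro k hk
      apply Real.sin_nonneg_of_nonneg_of_le_pi
      · positivity
      · have hkm : (k : ℝ) ≤ m := by exact_mod_cast hk
        calc (k : ℝ) * (π / m) ≤ (m : ℝ) * (π / m) :=
              mul_le_mul_of_nonneg_right hkm (by positivity)
          _ = π := by field_simp
    obtain ⟨h1, h2⟩ := altC_closed m hm3 t
    constructor
    · have := hnn (if Even t then t + 1 else t) (by split <;> omega)
      rw [← h1] at this
      exact nonneg_of_mul_nonneg_right (by linarith [this] :
        0 ≤ Real.sin (π/m) * (altC (4 * Real.cos (π / m) ^ 2) t).1) hsin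
    · have := hnn (if Even t then t else t + 1) (by split <;> omega)
      rw [← h2] at this
      have h2s : 0 < 2 * Real.sin (π / m) * Real.cos (π / m) := by positivity
      exact nonneg_of_mul_nonneg_right (by linarith [this] :
        0 ≤ 2 * Real.sin (π/m) * Real.cos (π/m) * (altC (4 * Real.cos (π / m) ^ 2) t).2) h2s

lemma altC_nonneg_inf (p : ℝ) (hp : 4 ≤ p) (t : ℕ) :
    0 ≤ (altC p t).1 ∧ 0 ≤ (altC p t).2 := by
  suffices h : 0 ≤ (altC p t).1 ∧ 0 ≤ (altC p t).2 ∧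
      (if Even t then 2 * (altC p t).2 ≤ (altC p t).1 else (altC p t).1 ≤ 2 * (altC p t).2) by
    exact ⟨h.1, h.2.1⟩
  induction t with
  | zero => norm_num [altC]
  | succ t ih =>
    obtain ⟨ih1, ih2, ih3⟩ := ih
    rcases Nat.even_or_odd t with he | ho
    · rw [if_pos he] at ih3
      have hne : ¬ Even (t + 1) := by simp [Nat.even_add_one, he]
      simp only [altC, if_pos he, if_neg hne]
      exact ⟨ih1, by linarith, by linarith⟩
    · have he' : ¬ Even t := Nat.not_even_iff_odd.mpr ho
      rw [if_neg he'] at ih3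
      have hne : Even (t + 1) := Nat.even_add_one.mpr he'
      simp only [altC, if_neg he', if_pos hne]
      have h1 : 2 * (altC p t).2 ≤ p * (altC p t).2 - (altC p t).1 := by nlinarith
      exact ⟨by linarith, ih2, by linarith⟩

lemma reflLin_apply {n : ℕ} (M : Matrix (Fin n) (Fin n) ℝ) (x : Fin n) (v : Fin n → ℝ) :
    reflLin M x v = v - (∑ k, M x k * v k) • (Pi.single x 1 : Fin n → ℝ) := rfl

lemma sum_single {n : ℕ} (M : Matrix (Fin n) (Fin n) ℝ) (e : ℝ) (x y : Fin n) :
    (∑ k, M x k * (e * (Pi.single y 1 : Fin n → ℝ) k)) = e * M x y := by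
  rw [Finset.sum_eq_single y]
  · simp [mul_comm]
  · intro k _ hk
    have : (Pi.single y 1 : Fin n → ℝ) k = 0 := by simp [Pi.single_apply, hk]
    simp [this]
  · simp

lemma reflLin_combo {n : ℕ} (M : Matrix (Fin n) (Fin n) ℝ) (x i j : Fin n) (c d : ℝ) :
    reflLin M x (c • (Pi.single i 1 : Fin n → ℝ) + d • (Pi.single j 1 : Fin n → ℝ))
      = c • (Pi.single i 1 : Fin n → ℝ) + d • (Pi.single j 1 : Fin n → ℝ)
        - (c * M x i + d * M x j) • (Pi.single x 1 : Fin n → ℝ) := by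
  have hsum : (∑ k, M x k * (c • (Pi.single i 1 : Fin n → ℝ)
      + d • (Pi.single j 1 : Fin n → ℝ)) k) = c * M x i + d * M x j := by
    have : ∀ k, M x k * (c • (Pi.single i 1 : Fin n → ℝ) + d • (Pi.single j 1 : Fin n → ℝ)) k
        = M x k * (c * (Pi.single i 1 : Fin n → ℝ) k)
          + M x k * (d * (Pi.single j 1 : Fin n → ℝ) k) := by
      intro k
      simp only [Pi.add_apply, Pi.smul_apply, smul_eq_mul]
      ring
    rw [Finset.sum_congr rfl (fun k _ => this k), Finset.sum_add_distrib, sum_single, sum_single]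
  rw [reflLin_apply, hsum]

variable {n : ℕ} {W : Type*} [Group W]

lemma coeff (M : Matrix (Fin n) (Fin n) ℝ) (K : CoxeterMatrix (Fin n)) (cs : CoxeterSystem K W)
    (ρ : W →* Module.End ℝ (Fin n → ℝ)) (hρ : ∀ i, ρ (cs.simple i) = reflLin M i)
    (hdiag : ∀ i, M i i = 2) (i j : Fin n) (hij : i ≠ j) (t : ℕ) :
    ρ (cs.wordProd (CoxeterSystem.alternatingWord i j t)) (Pi.single i 1)
      = (altC (M i j * M j i) t).1 • (Pi.single i 1 : Fin n → ℝ)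
        + (-(M j i) * (altC (M i j * M j i) t).2) • (Pi.single j 1 : Fin n → ℝ) := by
  induction t with
  | zero =>
    simp [CoxeterSystem.alternatingWord, altC]
  | succ t ih =>
    rw [CoxeterSystem.alternatingWord_succ', cs.wordProd_cons, map_mul, Module.End.mul_apply,
      ih]
    rcases Nat.even_or_odd t with he | ho
    · rw [if_pos he, hρ j, reflLin_combo M j i j, hdiag j]
      simp only [altC, if_pos he]
      module
    · have he' : ¬ Even t := Nat.not_even_iff_odd.mpr ho
      rw [if_neg he', hρ i, reflLin_combo M i i j, hdiag i]
      simp only [altC, if_neg he']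
      module

lemma key (M : Matrix (Fin n) (Fin n) ℝ) (K : CoxeterMatrix (Fin n)) (hMK : IsEGCM M K)
    (cs : CoxeterSystem K W) (ρ : W →* Module.End ℝ (Fin n → ℝ))
    (hρ : ∀ i, ρ (cs.simple i) = reflLin M i) :
    ∀ N : ℕ, ∀ w : W, cs.length w = N →
      ∀ i : Fin n, cs.length (w * cs.simple i) = cs.length w + 1 →
      ∀ r, 0 ≤ ρ w (Pi.single i 1) r := by
  obtain ⟨hdiag, hoff, hzero, hamp⟩ := hMK
  intro N
  induction N using Nat.strong_induction_on with
  | _ N IH =>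
  intro w hw i hasc r
  by_cases hw1 : w = 1
  · subst hw1
    simp only [map_one, Module.End.one_apply, Pi.single_apply]
    split <;> norm_num
  · obtain ⟨j, hj⟩ := cs.exists_rightDescent_of_ne_one hw1
    have hj' : cs.length (w * cs.simple j) < cs.length w := hj
    have hdesc : cs.length (w * cs.simple j) + 1 = cs.length w :=
      (cs.length_mul_simple w j).resolve_left (by omega)
    have hij : i ≠ j := by
      rintro rfl
      omega
    have hb : (0:ℝ) ≤ -(M j i) := by
      have := hoff j i (Ne.symm hij)
      linarith
    have cpos : ∀ t : ℕ, (K i j ≠ 0 → t < K i j) →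
        0 ≤ (altC (M i j * M j i) t).1 ∧ 0 ≤ (altC (M i j * M j i) t).2 := by
      intro t ht
      rcases hamp i j hij with ⟨hK0, hp4⟩ | ⟨hK2, hpcos⟩
      · exact altC_nonneg_inf _ hp4 t
      · rw [hpcos]
        exact altC_nonneg_fin (K i j) hK2 t (by have := ht (by omega); omega)
    have AUX : ∀ L : ℕ, ∀ u : W, cs.length u = L → ∀ t : ℕ, 1 ≤ t →
        w = u * cs.wordProd (CoxeterSystem.alternatingWord i j t) →
        cs.length u + t = cs.length w →
        (K i j ≠ 0 → t ≤ K i j) →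
        0 ≤ ρ w (Pi.single i 1) r := by
      intro L
      induction L using Nat.strong_induction_on with
      | _ L IHL =>
      intro u hu t ht1 hdec hlen hcap
      have hcap' : K i j ≠ 0 → t < K i j := by
        intro hK0
        rcases lt_or_eq_of_le (hcap hK0) with h | h
        · exact h
        exfalso
        have hbraid : cs.wordProd (CoxeterSystem.alternatingWord i j (K i j))
            = cs.wordProd (CoxeterSystem.alternatingWord j i (K i j)) := by
          have h2 := cs.prod_alternatingWord_eq_prod_alternatingWord_sub i j (K i j) (by omega)
          rwa [show K i j * 2 - K i j = K i j from by omega] at h2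
        have hsplit : cs.wordProd (CoxeterSystem.alternatingWord j i (K i j))
            = cs.wordProd (CoxeterSystem.alternatingWord i j (K i j - 1)) * cs.simple i := by
          conv_lhs => rw [show K i j = (K i j - 1) + 1 from by omega]
          rw [CoxeterSystem.alternatingWord_succ, cs.wordProd_concat]
        have hw' : w * cs.simple i
            = u * cs.wordProd (CoxeterSystem.alternatingWord i j (K i j - 1)) := by
          rw [hdec, h, hbraid, hsplit, mul_assoc, mul_assoc, cs.simple_mul_simple_self, mul_one]
        have hle : cs.length (w * cs.simple i) ≤ cs.length u + (K i j - 1) := by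
          rw [hw']
          calc cs.length (u * cs.wordProd (CoxeterSystem.alternatingWord i j (K i j - 1)))
              ≤ cs.length u + cs.length (cs.wordProd (CoxeterSystem.alternatingWord i j (K i j - 1))) :=
                cs.length_mul_le _ _
            _ ≤ cs.length u + (K i j - 1) := by
                have h3 := cs.length_wordProd_le (CoxeterSystem.alternatingWord i j (K i j - 1))
                rw [CoxeterSystem.length_alternatingWord] at h3
                omega
        omega
      set x : Fin n := if Even t then j else i with hx
      rcases cs.length_mul_simple u x with hne | hde
      · -- ascent case
        have hdecomp : CoxeterSystem.alternatingWord i j t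
            = (if Even t then i else j) :: CoxeterSystem.alternatingWord i j (t - 1) := by
          conv_lhs => rw [show t = (t - 1) + 1 from by omega]
          rw [CoxeterSystem.alternatingWord_succ']
          congr 1
          rcases Nat.even_or_odd t with he | ho
          · have h1 : ¬ Even (t - 1) := by
              rw [Nat.even_iff] at he ⊢
              omega
            simp [he, h1]
          · have he' : ¬ Even t := Nat.not_even_iff_odd.mpr ho
            have h1 : Even (t - 1) := by
              rw [Nat.even_iff] at he' ⊢
              omega
            simp [he', h1]
        have hy : cs.length (u * cs.simple (if Even t then i else j)) = cs.length u + 1 := by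
          have hsplit : w = (u * cs.simple (if Even t then i else j))
              * cs.wordProd (CoxeterSystem.alternatingWord i j (t - 1)) := by
            rw [hdec, hdecomp, cs.wordProd_cons, ← mul_assoc]
          have hge : cs.length w
              ≤ cs.length (u * cs.simple (if Even t then i else j)) + (t - 1) := by
            rw [hsplit]
            calc cs.length _ ≤ cs.length (u * cs.simple (if Even t then i else j))
                + cs.length (cs.wordProd (CoxeterSystem.alternatingWord i j (t - 1))) :=
                  cs.length_mul_le _ _
              _ ≤ _ := by
                  have h3 := cs.length_wordProd_le (CoxeterSystem.alternatingWord i j (t - 1))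
                  rw [CoxeterSystem.length_alternatingWord] at h3
                  omega
          rcases cs.length_mul_simple u (if Even t then i else j) with h | h
          · exact h
          · omega
        have hboth : cs.length (u * cs.simple i) = cs.length u + 1
            ∧ cs.length (u * cs.simple j) = cs.length u + 1 := by
          by_cases he : Even t
          · rw [hx, if_pos he] at hne
            rw [if_pos he] at hy
            exact ⟨hy, hne⟩
          · rw [hx, if_neg he] at hne
            rw [if_neg he] at hy
            exact ⟨hne, hy⟩
        have hult : cs.length u < N := by omega
        have pi' : ∀ r', 0 ≤ ρ u (Pi.single i 1) r' := by
          intro r'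
          exact IH (cs.length u) hult u rfl i (by omega) r'
        have pj' : ∀ r', 0 ≤ ρ u (Pi.single j 1) r' := by
          intro r'
          exact IH (cs.length u) hult u rfl j (by omega) r'
        obtain ⟨hC1, hC2⟩ := cpos t hcap'
        rw [hdec, map_mul, Module.End.mul_apply, coeff M K cs ρ hρ hdiag i j hij t,
          map_add, map_smul, map_smul]
        simp only [Pi.add_apply, Pi.smul_apply, smul_eq_mul]
        have := pi' r
        have := pj' r
        have h4 : (0:ℝ) ≤ -(M j i) * (altC (M i j * M j i) t).2 := mul_nonneg hb hC2
        positivity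
      · -- descent case
        have hlu : 1 ≤ cs.length u := by
          by_contra h
          have h0 : cs.length u = 0 := by omega
          have := cs.length_mul_simple_ne u x
          omega
        have hdec' : w = (u * cs.simple x)
            * cs.wordProd (CoxeterSystem.alternatingWord i j (t + 1)) := by
          rw [CoxeterSystem.alternatingWord_succ', cs.wordProd_cons, ← hx, hdec,
            mul_assoc, ← mul_assoc (cs.simple x), cs.simple_mul_simple_self, one_mul]
        exact IHL (cs.length u - 1) (by omega) (u * cs.simple x) (by omega) (t + 1) (by omega)
          hdec' (by omega) (fun hK => by have := hcap' hK; omega)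
    have h1 : CoxeterSystem.alternatingWord i j 1 = [j] := rfl
    refine AUX (cs.length (w * cs.simple j)) (w * cs.simple j) rfl 1 le_rfl ?_ (by omega) ?_
    · rw [h1, cs.wordProd_singleton, mul_assoc, cs.simple_mul_simple_self, mul_one]
    · intro hK
      omega

end QSF

/-- The quasi-standard geometric representation of the Coxeter group associated to an
E-GCM is faithful. -/
theorem quasi_standard_faithful {n : ℕ} {W : Type*} [Group W]
    (M : Matrix (Fin n) (Fin n) ℝ) (K : CoxeterMatrix (Fin n)) (hMK : IsEGCM M K)
    (cs : CoxeterSystem K W)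
    (ρ : W →* Module.End ℝ (Fin n → ℝ))
    (hρ : ∀ i, ρ (cs.simple i) = reflLin M i) :
    Function.Injective ρ := by
  have key := QSF.key M K hMK cs ρ hρ
  have h1 : ∀ w : W, ρ w = 1 → w = 1 := by
    intro w hw
    by_contra hw1
    obtain ⟨i, hi⟩ := cs.exists_rightDescent_of_ne_one hw1
    have hi' : cs.length (w * cs.simple i) < cs.length w := hi
    have hdesc : cs.length (w * cs.simple i) + 1 = cs.length w :=
      (cs.length_mul_simple w i).resolve_left (by omega)
    have hasc : cs.length ((w * cs.simple i) * cs.simple i)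
        = cs.length (w * cs.simple i) + 1 := by
      rw [mul_assoc, cs.simple_mul_simple_self, mul_one]
      omega
    have hpos := key _ (w * cs.simple i) rfl i hasc i
    rw [map_mul, hw, one_mul, hρ i] at hpos
    have hval : reflLin M i (Pi.single i 1) i = -1 := by
      have hsum : (∑ k, M i k * (Pi.single i 1 : Fin n → ℝ) k) = M i i := by
        simpa using QSF.sum_single M 1 i i
      rw [QSF.reflLin_apply, hsum]
      simp only [Pi.sub_apply, Pi.smul_apply, smul_eq_mul, hMK.1 i, Pi.single_eq_same]
      norm_num
    rw [hval] at hpos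
    linarith
  intro w₁ w₂ h
  have h2 : ρ (w₁ * w₂⁻¹) = 1 := by
    have hinv : ρ w₂ * ρ w₂⁻¹ = 1 := by
      rw [← map_mul, mul_inv_cancel, map_one]
    rw [map_mul, h, hinv]
  have h3 := h1 _ h2
  exact mul_inv_eq_one.mp h3
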